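/- Let n ≥ 2, r > 0, c ≥ 0, p, q, q̄ ∈ (0,1) with q > q̄, and T = p q^n/(p q^n + (1−p) q̄^n). Then the NE token amount t = (n−1)r/(n²(1+c−T)) satisfies t < r/(n(1+c−T)), and the total staked amount n·t = (n−1)r/(n(1+c−T)) is strictly increasing in n and converges to r/(1+c−T_∞) where T_∞ = 1 (i.e., total stake tends to r/c if c > 0). -/

import Mathlib

theorem aux16 (A B da db r : ℝ) (hA : 2 ≤ A) (hAB : A < B) (hdb : 0 < db) (hd : db < da) (hr : 0 < r) :
    (A - 1) * r / (A * da) < (B - 1) * r / (B * db) := by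
  have hA0 : (0:ℝ) < A := by linarith
  have hB0 : (0:ℝ) < B := by linarith
  have hda : 0 < da := lt_trans hdb hd
  rw [div_lt_div_iff₀ (by positivity) (by positivity)]
  have h1 : (A - 1) * B < (B - 1) * A := by nlinarith
  have h2 : (A-1)*r*(B*db) < (B-1)*r*(A*db) := by
    nlinarith [mul_pos (mul_pos (sub_pos.2 h1) hr) hdb]
  have h3 : (B-1)*r*(A*db) < (B-1)*r*(A*da) := by
    nlinarith [mul_pos (mul_pos (mul_pos (by linarith : (0:ℝ) < B - 1) hr) hA0) (sub_pos.2 hd)]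
  linarith

theorem stmt16 (n : ℕ) (hn : 2 ≤ n) (r c p q qb : ℝ)
    (hr : 0 < r) (hc : 0 ≤ c)
    (hp : p ∈ Set.Ioo (0:ℝ) 1) (hq : q ∈ Set.Ioo (0:ℝ) 1) (hqb : qb ∈ Set.Ioo (0:ℝ) 1)
    (hqqb : q > qb) :
    let T : ℕ → ℝ := fun m => p * q ^ m / (p * q ^ m + (1 - p) * qb ^ m)
    let t : ℕ → ℝ := fun m => ((m : ℝ) - 1) * r / ((m : ℝ) ^ 2 * (1 + c - T m))
    t n < r / ((n : ℝ) * (1 + c - T n)) ∧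
    StrictMonoOn (fun m : ℕ => (m : ℝ) * t m) {m : ℕ | 2 ≤ m} ∧
    (0 < c → Filter.Tendsto (fun m : ℕ => (m : ℝ) * t m) Filter.atTop (nhds (r / c))) := by
  intro T t
  obtain ⟨hp0, hp1⟩ := hp
  obtain ⟨hq0, hq1⟩ := hq
  obtain ⟨hqb0, hqb1⟩ := hqb
  set k : ℝ := (1 - p) / p with hk
  have hk0 : 0 < k := div_pos (by linarith) hp0
  set x : ℝ := qb / q with hx
  have hx0 : 0 < x := div_pos hqb0 hq0
  have hx1 : x < 1 := (div_lt_one hq0).2 hqqb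
  -- T m = 1 / (1 + k * x ^ m)
  have hTeq : ∀ m : ℕ, T m = 1 / (1 + k * x ^ m) := by
    intro m
    have hd : (0:ℝ) < p * q ^ m + (1 - p) * qb ^ m := by
      have := pow_pos hq0 m
      have := pow_pos hqb0 m
      nlinarith
    have h1 : (0:ℝ) < q ^ m := pow_pos hq0 m
    have h2 : (0:ℝ) < 1 + (1 - p) / p * (qb ^ m / q ^ m) := by
      have := mul_pos (div_pos (by linarith : (0:ℝ) < 1 - p) hp0)
        (div_pos (pow_pos hqb0 m) h1)
      linarith
    simp only [T, hk, hx, div_pow]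
    rw [div_eq_div_iff hd.ne' h2.ne']
    field_simp
  have hT1 : ∀ m : ℕ, T m < 1 := by
    intro m
    rw [hTeq m]
    have : (0:ℝ) < k * x ^ m := by positivity
    rw [div_lt_one (by linarith)]
    linarith
  have hdpos : ∀ m : ℕ, 0 < 1 + c - T m := fun m => by have := hT1 m; linarith
  -- T is strictly increasing in m
  have hTmono : ∀ a b : ℕ, a < b → T a < T b := by
    intro a b hab
    rw [hTeq a, hTeq b]
    have hxa : x ^ b < x ^ a := pow_lt_pow_right_of_lt_one₀ hx0 hx1 hab
    have h1 : (0:ℝ) < 1 + k * x ^ b := by positivity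
    have h2 : (0:ℝ) < 1 + k * x ^ a := by positivity
    rw [div_lt_div_iff₀ h2 h1]
    nlinarith
  -- the reduced form of m * t m
  have hmt : ∀ m : ℕ, 1 ≤ m → (m : ℝ) * t m = ((m : ℝ) - 1) * r / ((m : ℝ) * (1 + c - T m)) := by
    intro m hm
    have hm0 : (0:ℝ) < (m : ℝ) := by exact_mod_cast hm
    have hd := hdpos m
    simp only [t]
    rw [eq_div_iff (by positivity), mul_comm ((m:ℝ)) _, mul_assoc,
      div_mul_eq_mul_div, div_eq_iff (by positivity)]
    ring
  refine ⟨?_, ?_, ?_⟩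
  · -- part 1
    have hn0 : (2:ℝ) ≤ (n : ℝ) := by exact_mod_cast hn
    have hnpos : (0:ℝ) < (n : ℝ) := by linarith
    have hd := hdpos n
    simp only [t]
    rw [div_lt_div_iff₀ (by positivity) (by positivity)]
    nlinarith [mul_pos (mul_pos hr hd) hnpos]
  · -- part 2
    intro a ha b hb hab
    simp only [Set.mem_setOf_eq] at ha hb
    have ha2 : (2:ℝ) ≤ (a : ℝ) := by exact_mod_cast ha
    have habR : (a : ℝ) < (b : ℝ) := by exact_mod_cast hab
    have hda := hdpos a
    have hdb := hdpos b
    have hTab := hTmono a b hab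
    simp only
    rw [hmt a (by omega), hmt b (by omega)]
    exact aux16 _ _ _ _ _ ha2 habR hdb (by linarith) hr
  · -- part 3
    intro hc0
    have hxlim : Filter.Tendsto (fun m : ℕ => x ^ m) Filter.atTop (nhds 0) :=
      tendsto_pow_atTop_nhds_zero_of_lt_one hx0.le hx1
    have hTlim : Filter.Tendsto (fun m : ℕ => T m) Filter.atTop (nhds 1) := by
      have h1 : Filter.Tendsto (fun m : ℕ => 1 + k * x ^ m) Filter.atTop (nhds 1) := by
        have := (hxlim.const_mul k).const_add (1:ℝ)
        simpa using this
      have := (tendsto_const_nhds :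
        Filter.Tendsto (fun _ : ℕ => (1:ℝ)) Filter.atTop (nhds 1)).div h1 one_ne_zero
      simp only [div_one] at this
      exact this.congr (fun m => (hTeq m).symm)
    have hdlim : Filter.Tendsto (fun m : ℕ => 1 + c - T m) Filter.atTop (nhds c) := by
      have := (tendsto_const_nhds :
        Filter.Tendsto (fun _ : ℕ => (1:ℝ) + c) Filter.atTop (nhds (1 + c))).sub hTlim
      simpa using this
    have hratio : Filter.Tendsto (fun m : ℕ => ((m : ℝ) - 1) / (m : ℝ)) Filter.atTop (nhds 1) := by
      have h1 : Filter.Tendsto (fun m : ℕ => 1 - 1 / (m : ℝ)) Filter.atTop (nhds 1) := by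
        have := tendsto_one_div_atTop_nhds_zero_nat.const_sub (1:ℝ)
        simpa using this
      refine h1.congr' ?_
      filter_upwards [Filter.eventually_ge_atTop 1] with m hm
      have hm0 : ((m:ℝ)) ≠ 0 := by positivity
      field_simp
    have hfull : Filter.Tendsto (fun m : ℕ => ((m : ℝ) - 1) / (m : ℝ) * r / (1 + c - T m))
        Filter.atTop (nhds (r / c)) := by
      have := ((hratio.mul_const r).div hdlim hc0.ne')
      rw [one_mul] at this; exact this
    refine hfull.congr' ?_
    filter_upwards [Filter.eventually_ge_atTop 1] with m hm
    rw [hmt m hm, div_mul_eq_mul_div, div_div]
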